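/- arXiv:0805.3559 — 10 statements merged into one kernel-verified Lean document; each statement's English description precedes it below -/
import Mathlib

section
/- Let F : ℝ → ℝ be continuous, z₁' integrable supported in [0,c₁] with total integral -1, z₂' integrable supported in [0,c₂] with total integral -1, and let z'(x) = -∫ z₁'(x-t) z₂'(t) dt. If lim_{b→∞} ∫₀^{c₁} F(x+b) z₁'(x) dx = L and the convergence of b ↦ ∫₀^{c₁} F(x+b) z₁'(x) dx is uniform in the sense needed, then lim_{b→∞} ∫₀^{c₁+c₂} F(x+b) z'(x) dx = L. -/
open MeasureTheory Filter intervalIntegral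

lemma supp_integral_eq {c : ℝ} (hc : 0 ≤ c) (g : ℝ → ℝ)
    (hg : ∀ x, x ∉ Set.Icc (0:ℝ) c → g x = 0) :
    ∫ x in (0:ℝ)..c, g x = ∫ x, g x := by
  rw [intervalIntegral.integral_of_le hc, ← MeasureTheory.integral_Icc_eq_integral_Ioc,
    MeasureTheory.setIntegral_eq_integral_of_forall_compl_eq_zero hg]

/-- Key combination lemma: if the terminated limit exists for `z₁'`, then it exists,
with the same value, for the negative convolution `z'` of `z₁'` and `z₂'`. -/
theorem combined_termination_same_limit
    (c₁ c₂ : ℝ) (hc₁ : 0 < c₁) (hc₂ : 0 < c₂)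
    (F z₁' z₂' : ℝ → ℝ) (L : ℝ)
    (hF : Continuous F)
    (hz₁'int : Integrable z₁') (hz₂'int : Integrable z₂')
    (hz₁'supp : ∀ x, x ∉ Set.Icc (0:ℝ) c₁ → z₁' x = 0)
    (hz₂'supp : ∀ x, x ∉ Set.Icc (0:ℝ) c₂ → z₂' x = 0)
    (hz₁'sum : ∫ x, z₁' x = -1) (hz₂'sum : ∫ x, z₂' x = -1)
    (z' : ℝ → ℝ) (hz' : ∀ x, z' x = -∫ t, z₁' (x - t) * z₂' t)
    (hlim : Tendsto (fun b => ∫ x in (0:ℝ)..c₁, F (x + b) * z₁' x) atTop (nhds L))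
    (hunif : TendstoUniformlyOn
      (fun b s => ∫ x in (0:ℝ)..c₁, F (x + s + b) * z₁' x)
      (fun _ => L) atTop (Set.Icc 0 c₂)) :
    Tendsto (fun b => ∫ x in (0:ℝ)..(c₁ + c₂), F (x + b) * z' x) atTop (nhds L) := by
  -- notation
  set G : ℝ → ℝ → ℝ := fun b s => ∫ x in (0:ℝ)..c₁, F (x + s + b) * z₁' x with hG
  -- convolution integrand vanishing outside support
  have hvanish : ∀ x : ℝ, x ∉ Set.Icc (0:ℝ) (c₁ + c₂) → ∀ t : ℝ,
      z₁' (x - t) * z₂' t = 0 := by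
    intro x hx t
    by_cases ht : t ∈ Set.Icc (0:ℝ) c₂
    · have : x - t ∉ Set.Icc (0:ℝ) c₁ := by
        simp only [Set.mem_Icc, not_and_or, not_le] at hx ⊢
        rcases hx with h | h
        · left; linarith [ht.1]
        · right; linarith [ht.2]
      rw [hz₁'supp _ this, zero_mul]
    · rw [hz₂'supp _ ht, mul_zero]
  -- product integrability
  have hprod : ∀ b : ℝ, Integrable
      (fun p : ℝ × ℝ => F (p.1 + b) * (z₁' (p.1 - p.2) * z₂' p.2))
      (volume.prod volume) := by
    intro b
    have hw : Integrable (fun p : ℝ × ℝ => z₂' p.2 * z₁' (p.1 - p.2))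
        (volume.prod volume) :=
      hz₂'int.convolution_integrand (ContinuousLinearMap.mul ℝ ℝ) hz₁'int
    obtain ⟨C, hC⟩ := (isCompact_Icc (α := ℝ) (a := 0) (b := c₁ + c₂)).exists_bound_of_continuousOn
      (f := fun x => F (x + b)) ((hF.comp (continuous_add_right b)).continuousOn)
    set Fc : ℝ → ℝ := Set.indicator (Set.Icc (0:ℝ) (c₁ + c₂)) (fun x => F (x + b)) with hFc
    have hC0 : 0 ≤ C := le_trans (norm_nonneg _) (hC 0 (by constructor <;> [rfl; positivity]))
    have hmeas : AEStronglyMeasurable (fun p : ℝ × ℝ => Fc p.1) (volume.prod volume) := by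
      have : Measurable Fc :=
        (hF.comp (continuous_add_right b)).measurable.indicator measurableSet_Icc
      exact (this.comp measurable_fst).aestronglyMeasurable
    have hbdd : Integrable (fun p : ℝ × ℝ => Fc p.1 * (z₂' p.2 * z₁' (p.1 - p.2)))
        (volume.prod volume) := by
      refine hw.bdd_mul (c := C) hmeas (Filter.Eventually.of_forall fun p => ?_)
      by_cases hp : p.1 ∈ Set.Icc (0:ℝ) (c₁ + c₂)
      · simp only [hFc, Set.indicator_of_mem hp]; exact hC _ hp
      · simp only [hFc, Set.indicator_of_notMem hp]; simpa using hC0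
    refine hbdd.congr (Filter.Eventually.of_forall fun p => ?_)
    show Fc p.1 * (z₂' p.2 * z₁' (p.1 - p.2)) = F (p.1 + b) * (z₁' (p.1 - p.2) * z₂' p.2)
    by_cases hp : p.1 ∈ Set.Icc (0:ℝ) (c₁ + c₂)
    · rw [hFc, Set.indicator_of_mem hp]; ring
    · rw [hFc, Set.indicator_of_notMem hp, hvanish _ hp]; simp
  -- rewrite the quantity under the limit
  have hrw : ∀ b : ℝ, (∫ x in (0:ℝ)..(c₁ + c₂), F (x + b) * z' x)
      = -∫ t, z₂' t * G b t := by
    intro b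
    have h1 : (∫ x in (0:ℝ)..(c₁ + c₂), F (x + b) * z' x) = ∫ x, F (x + b) * z' x := by
      apply supp_integral_eq (by positivity)
      intro x hx
      rw [hz' x]
      have : (∫ t, z₁' (x - t) * z₂' t) = 0 := by
        simp only [hvanish x hx]; exact integral_zero _ _
      rw [this]; simp
    rw [h1]
    have h2 : ∀ x : ℝ, F (x + b) * z' x
        = -∫ t, F (x + b) * (z₁' (x - t) * z₂' t) := by
      intro x
      rw [hz' x, mul_neg, MeasureTheory.integral_const_mul]
    simp only [h2]
    rw [MeasureTheory.integral_neg]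
    congr 1
    rw [MeasureTheory.integral_integral_swap (hprod b)]
    congr 1
    ext t
    have h3 : (∫ x, F (x + b) * (z₁' (x - t) * z₂' t))
        = (∫ x, F (x + b) * z₁' (x - t)) * z₂' t := by
      rw [← MeasureTheory.integral_mul_const]
      congr 1; ext x; ring
    rw [h3, mul_comm]
    congr 1
    have h4 : (∫ x, F (x + b) * z₁' (x - t))
        = ∫ y, F (y + t + b) * z₁' y := by
      rw [← MeasureTheory.integral_sub_right_eq_self (fun y => F (y + t + b) * z₁' y) t]
      congr 1; ext x; congr 2; ring
    rw [h4, hG]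
    exact (supp_integral_eq hc₁.le _ (fun y hy => by rw [hz₁'supp _ hy, mul_zero])).symm
  simp only [hrw]
  -- integrability of t ↦ z₂' t * G b t
  have hintG : ∀ b : ℝ, Integrable (fun t => z₂' t * G b t) := by
    intro b
    have := (hprod b).integral_prod_right
    refine this.congr (Filter.Eventually.of_forall fun t => ?_)
    show (∫ x, F (x + b) * (z₁' (x - t) * z₂' t)) = z₂' t * G b t
    have h3 : (∫ x, F (x + b) * (z₁' (x - t) * z₂' t))
        = (∫ x, F (x + b) * z₁' (x - t)) * z₂' t := by
      rw [← MeasureTheory.integral_mul_const]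
      congr 1; ext x; ring
    rw [h3, mul_comm]
    congr 1
    have h4 : (∫ x, F (x + b) * z₁' (x - t))
        = ∫ y, F (y + t + b) * z₁' y := by
      rw [← MeasureTheory.integral_sub_right_eq_self (fun y => F (y + t + b) * z₁' y) t]
      congr 1; ext x; congr 2; ring
    rw [h4, hG]
    exact (supp_integral_eq hc₁.le _ (fun y hy => by rw [hz₁'supp _ hy, mul_zero])).symm
  -- the limit
  rw [Metric.tendsto_atTop]
  intro ε hε
  set I : ℝ := ∫ t, |z₂' t| with hI
  have hI0 : 0 ≤ I := integral_nonneg fun t => abs_nonneg _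
  have hε' : (0:ℝ) < ε / (I + 1) := div_pos hε (by linarith)
  obtain ⟨N, hN⟩ := Filter.eventually_atTop.1
    (Metric.tendstoUniformlyOn_iff.1 hunif (ε / (I + 1)) hε')
  refine ⟨N, fun b hb => ?_⟩
  have key : ∀ s ∈ Set.Icc (0:ℝ) c₂, |G b s - L| ≤ ε / (I + 1) := by
    intro s hs
    have := hN b hb s hs
    rw [Real.dist_eq, abs_sub_comm] at this
    exact this.le
  have hLint : Integrable (fun t => z₂' t * L) := hz₂'int.mul_const L
  have heq : (-∫ t, z₂' t * G b t) - L = -∫ t, z₂' t * (G b t - L) := by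
    have : (∫ t, z₂' t * (G b t - L)) = (∫ t, z₂' t * G b t) - ∫ t, z₂' t * L := by
      rw [← MeasureTheory.integral_sub (hintG b) hLint]
      congr 1; ext t; ring
    rw [this, MeasureTheory.integral_mul_const, hz₂'sum]
    ring
  rw [Real.dist_eq, heq, abs_neg]
  have hbound : |∫ t, z₂' t * (G b t - L)| ≤ (ε / (I + 1)) * I := by
    calc |∫ t, z₂' t * (G b t - L)| ≤ ∫ t, |z₂' t * (G b t - L)| := by
          exact MeasureTheory.norm_integral_le_integral_norm (fun t => z₂' t * (G b t - L))
      _ ≤ ∫ t, |z₂' t| * (ε / (I + 1)) := by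
          apply MeasureTheory.integral_mono_of_nonneg
          · exact Filter.Eventually.of_forall fun t => abs_nonneg _
          · exact hz₂'int.abs.mul_const _
          · refine Filter.Eventually.of_forall fun t => ?_
            show |z₂' t * (G b t - L)| ≤ |z₂' t| * (ε / (I + 1))
            rw [abs_mul]
            by_cases ht : t ∈ Set.Icc (0:ℝ) c₂
            · exact mul_le_mul_of_nonneg_left (key t ht) (abs_nonneg _)
            · rw [hz₂'supp _ ht]; simp [hε'.le]
      _ = (ε / (I + 1)) * I := by rw [MeasureTheory.integral_mul_const, hI, mul_comm]
  calc |∫ t, z₂' t * (G b t - L)| ≤ (ε / (I + 1)) * I := hbound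
    _ < ε := by
        have h1 : I < I + 1 := by linarith
        calc (ε / (I + 1)) * I < (ε / (I + 1)) * (I + 1) :=
              mul_lt_mul_of_pos_left h1 hε'
          _ = ε := div_mul_cancel₀ ε (by linarith)
end

section
/- Linearity: let f, g : ℝ → ℝ with antiderivatives F, G, and suppose lim_{b→∞} ∫₀^{c_f} F(x+b) z_f'(x) dx and lim_{b→∞} ∫₀^{c_g} G(x+b) z_g'(x) dx both exist, where z_f', z_g' are supported in [0,c_f], [0,c_g] and each integrates to -1. Then with z' the negative convolution of z_f' and z_g', the limit lim_{b→∞} ∫₀^{c_f+c_g} (αF + βG)(x+b) z'(x) dx exists and equals α·lim_b ∫₀^{c_f} F(x+b) z_f'(x) dx + β·lim_b ∫₀^{c_g} G(x+b) z_g'(x) dx, for all real α, β. -/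
open MeasureTheory Filter intervalIntegral

private lemma ae_ne_zero' : ∀ᵐ x : ℝ, x ≠ 0 := by
  rw [ae_iff]
  simp only [ne_eq, not_not, Set.setOf_eq_eq_singleton]
  exact measure_singleton 0

private lemma interval_eq_full' {c : ℝ} (hc : 0 ≤ c) {f : ℝ → ℝ}
    (hf : ∀ x, x ∉ Set.Icc (0:ℝ) c → f x = 0) :
    ∫ x in (0:ℝ)..c, f x = ∫ x, f x := by
  rw [intervalIntegral.integral_of_le hc]
  apply setIntegral_eq_integral_of_ae_compl_eq_zero
  filter_upwards [ae_ne_zero'] with x hx hxn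
  exact hf x fun hmem => hxn ⟨hmem.1.lt_of_ne (Ne.symm hx), hmem.2⟩

private lemma terminated_key
    (c1 c2 : ℝ) (h1 : 0 < c1) (h2 : 0 < c2)
    (F k1 k2 : ℝ → ℝ) (L : ℝ)
    (hF : Continuous F)
    (hk1 : Integrable k1) (hk2 : Integrable k2)
    (hs1 : ∀ x, x ∉ Set.Icc (0:ℝ) c1 → k1 x = 0)
    (hs2 : ∀ x, x ∉ Set.Icc (0:ℝ) c2 → k2 x = 0)
    (hsum2 : ∫ x, k2 x = -1)
    (hunif : TendstoUniformlyOn (fun b s => ∫ x in (0:ℝ)..c1, F (x + s + b) * k1 x)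
      (fun _ => L) atTop (Set.Icc 0 c2)) :
    Tendsto (fun b => ∫ x in (0:ℝ)..(c1 + c2), F (x + b) * (-∫ t, k1 (x - t) * k2 t))
      atTop (nhds L) := by
  set H : ℝ → ℝ → ℝ := fun b s => ∫ x in (0:ℝ)..c1, F (x + s + b) * k1 x with hH
  have hconv : Integrable (fun p : ℝ × ℝ => k2 p.2 * k1 (p.1 - p.2))
      (volume.prod volume) :=
    hk2.convolution_integrand (ContinuousLinearMap.mul ℝ ℝ) hk1
  -- support of the convolution
  have hzsupp : ∀ x, x ∉ Set.Icc (0:ℝ) (c1 + c2) → (∫ t, k1 (x - t) * k2 t) = 0 := by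
    intro x hx
    have hzero : ∀ t, k1 (x - t) * k2 t = 0 := by
      intro t
      by_cases ht : t ∈ Set.Icc (0:ℝ) c2
      · have hout : x - t ∉ Set.Icc (0:ℝ) c1 := by
          simp only [Set.mem_Icc, not_and_or, not_le] at hx ⊢
          rcases hx with h | h
          · left; have := ht.1; linarith
          · right; have := ht.2; linarith
        rw [hs1 _ hout, zero_mul]
      · rw [hs2 _ ht, mul_zero]
    simp only [hzero, integral_zero]
  -- key per-b equality and integrability
  have key_eq : ∀ b : ℝ,
      ((∫ x in (0:ℝ)..(c1 + c2), F (x + b) * (-∫ t, k1 (x - t) * k2 t))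
        = -∫ t, k2 t * H b t) ∧
      Integrable (fun t => k2 t * H b t) := by
    intro b
    obtain ⟨C, hC⟩ := (isCompact_Icc (a := b) (b := b + (c1 + c2))).exists_bound_of_continuousOn
      hF.continuousOn
    set C' := max C 0 with hC'
    have hC'0 : (0:ℝ) ≤ C' := le_max_right _ _
    have hFb : ∀ x ∈ Set.Icc b (b + (c1 + c2)), ‖F x‖ ≤ C' :=
      fun x hx => (hC x hx).trans (le_max_left _ _)
    have hmeas : AEStronglyMeasurable (fun p : ℝ × ℝ => F (p.1 + b) * (k1 (p.1 - p.2) * k2 p.2))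
        (volume.prod volume) := by
      have h1m : AEStronglyMeasurable (fun p : ℝ × ℝ => k1 (p.1 - p.2) * k2 p.2)
          (volume.prod volume) := by
        have h := hconv.1
        have : (fun p : ℝ × ℝ => k2 p.2 * k1 (p.1 - p.2))
            = fun p : ℝ × ℝ => k1 (p.1 - p.2) * k2 p.2 := funext fun p => mul_comm _ _
        rwa [this] at h
      exact ((hF.comp (continuous_fst.add continuous_const)).aestronglyMeasurable).mul h1m
    have hJ : Integrable (fun p : ℝ × ℝ => F (p.1 + b) * (k1 (p.1 - p.2) * k2 p.2))
        (volume.prod volume) := by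
      refine (hconv.norm.const_mul C').mono' hmeas (Filter.Eventually.of_forall fun p => ?_)
      by_cases hz : k1 (p.1 - p.2) * k2 p.2 = 0
      · rw [hz, mul_zero, norm_zero]
        positivity
      · have hk1ne : k1 (p.1 - p.2) ≠ 0 := left_ne_zero_of_mul hz
        have hk2ne : k2 p.2 ≠ 0 := right_ne_zero_of_mul hz
        have hm1 : p.1 - p.2 ∈ Set.Icc (0:ℝ) c1 := by
          by_contra h; exact hk1ne (hs1 _ h)
        have hm2 : p.2 ∈ Set.Icc (0:ℝ) c2 := by
          by_contra h; exact hk2ne (hs2 _ h)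
        have hx : p.1 + b ∈ Set.Icc b (b + (c1 + c2)) := by
          constructor
          · have := hm1.1; have := hm2.1; linarith
          · have := hm1.2; have := hm2.2; linarith
        calc ‖F (p.1 + b) * (k1 (p.1 - p.2) * k2 p.2)‖
            = ‖F (p.1 + b)‖ * ‖k1 (p.1 - p.2) * k2 p.2‖ := norm_mul _ _
          _ ≤ C' * ‖k1 (p.1 - p.2) * k2 p.2‖ :=
              mul_le_mul_of_nonneg_right (hFb _ hx) (norm_nonneg _)
          _ = C' * ‖k2 p.2 * k1 (p.1 - p.2)‖ := by rw [mul_comm (k1 (p.1 - p.2))]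
    -- inner integral computation
    have inner_eq : ∀ t : ℝ, (∫ x, F (x + b) * (k1 (x - t) * k2 t)) = k2 t * H b t := by
      intro t
      have e1 : (∫ x, F (x + b) * (k1 (x - t) * k2 t))
          = (∫ x, F (x + b) * k1 (x - t)) * k2 t := by
        rw [← MeasureTheory.integral_mul_const]
        apply MeasureTheory.integral_congr_ae
        filter_upwards with x
        ring
      have e2 : (∫ x, F (x + t + b) * k1 x) = ∫ x, F (x + b) * k1 (x - t) := by
        have h := integral_add_right_eq_self (μ := volume)
          (fun y => F (y + b) * k1 (y - t)) t
        simpa [add_sub_cancel_right] using h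
      have e3 : H b t = ∫ x, F (x + t + b) * k1 x := by
        simp only [hH]
        exact interval_eq_full' h1.le (fun x hx => by rw [hs1 x hx, mul_zero])
      rw [e1, ← e2, ← e3, mul_comm]
    have hint : Integrable (fun t => k2 t * H b t) := by
      have h := hJ.integral_prod_right
      exact h.congr (Filter.Eventually.of_forall fun t => inner_eq t)
    refine ⟨?_, hint⟩
    have h0 : (∫ x in (0:ℝ)..(c1 + c2), F (x + b) * (-∫ t, k1 (x - t) * k2 t))
        = -∫ x in (0:ℝ)..(c1 + c2), F (x + b) * ∫ t, k1 (x - t) * k2 t := by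
      simp_rw [mul_neg]
      exact intervalIntegral.integral_neg
    rw [h0]
    congr 1
    rw [interval_eq_full' (by linarith : (0:ℝ) ≤ c1 + c2)
      (fun x hx => by rw [hzsupp x hx, mul_zero])]
    calc (∫ x, F (x + b) * ∫ t, k1 (x - t) * k2 t)
        = ∫ x, ∫ t, F (x + b) * (k1 (x - t) * k2 t) := by
          apply MeasureTheory.integral_congr_ae
          filter_upwards with x
          exact (MeasureTheory.integral_const_mul _ _).symm
      _ = ∫ t, ∫ x, F (x + b) * (k1 (x - t) * k2 t) :=
          integral_integral_swap hJ
      _ = ∫ t, k2 t * H b t := by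
          apply MeasureTheory.integral_congr_ae
          filter_upwards with t
          exact inner_eq t
  -- limit of the t-integral
  set M := ∫ t, ‖k2 t‖ with hMdef
  have hM0 : 0 ≤ M := integral_nonneg fun t => norm_nonneg _
  have hL2 : (∫ t, k2 t * L) = -L := by
    rw [MeasureTheory.integral_mul_const, hsum2]; ring
  have main : Tendsto (fun b => ∫ t, k2 t * H b t) atTop (nhds (-L)) := by
    rw [Metric.tendsto_atTop]
    intro ε hε
    have hM1 : (0:ℝ) < M + 1 := by linarith
    have hε' : 0 < ε / (M + 1) := div_pos hε hM1
    have hev := Metric.tendstoUniformlyOn_iff.1 hunif (ε / (M + 1)) hε'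
    rw [eventually_atTop] at hev
    obtain ⟨N, hN⟩ := hev
    refine ⟨N, fun b hb => ?_⟩
    have hHL : ∀ t ∈ Set.Icc (0:ℝ) c2, |H b t - L| < ε / (M + 1) := by
      intro t ht
      have h := hN b hb t ht
      rwa [dist_comm, Real.dist_eq] at h
    have hsub : (∫ t, k2 t * (H b t - L)) = (∫ t, k2 t * H b t) - (-L) := by
      simp_rw [mul_sub]
      rw [integral_sub (key_eq b).2 (hk2.mul_const L), hL2]
    rw [Real.dist_eq, ← hsub]
    have hbound : ‖∫ t, k2 t * (H b t - L)‖ ≤ ∫ t, ‖k2 t‖ * (ε / (M + 1)) := by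
      apply MeasureTheory.norm_integral_le_of_norm_le (hk2.norm.mul_const _)
      refine Filter.Eventually.of_forall fun t => ?_
      by_cases ht : t ∈ Set.Icc (0:ℝ) c2
      · rw [norm_mul, Real.norm_eq_abs (H b t - L)]
        exact mul_le_mul_of_nonneg_left (hHL t ht).le (norm_nonneg _)
      · rw [hs2 t ht]
        simp
    have hlt : M * (ε / (M + 1)) < ε := by
      calc M * (ε / (M + 1)) < (M + 1) * (ε / (M + 1)) :=
            mul_lt_mul_of_pos_right (by linarith) hε'
        _ = ε := by field_simp
    calc |∫ t, k2 t * (H b t - L)| = ‖∫ t, k2 t * (H b t - L)‖ := (Real.norm_eq_abs _).symm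
      _ ≤ ∫ t, ‖k2 t‖ * (ε / (M + 1)) := hbound
      _ = M * (ε / (M + 1)) := MeasureTheory.integral_mul_const _ _
      _ < ε := hlt
  have hneg : Tendsto (fun b => -∫ t, k2 t * H b t) atTop (nhds (-(-L))) := main.neg
  rw [neg_neg] at hneg
  exact Tendsto.congr (fun b => ((key_eq b).1).symm) hneg

/-- Linearity of the terminated integral: with `z'` the negative convolution of
`z_f'` and `z_g'`, the terminated limit of `α F + β G` exists and equals the
corresponding linear combination of the two terminated limits. -/
theorem terminated_integral_linear
    (cf cg : ℝ) (hcf : 0 < cf) (hcg : 0 < cg)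
    (F G zf' zg' : ℝ → ℝ) (Lf Lg α β : ℝ)
    (hF : Continuous F) (hG : Continuous G)
    (hzf'int : Integrable zf') (hzg'int : Integrable zg')
    (hzf'supp : ∀ x, x ∉ Set.Icc (0:ℝ) cf → zf' x = 0)
    (hzg'supp : ∀ x, x ∉ Set.Icc (0:ℝ) cg → zg' x = 0)
    (hzf'sum : ∫ x, zf' x = -1) (hzg'sum : ∫ x, zg' x = -1)
    (z' : ℝ → ℝ) (hz' : ∀ x, z' x = -∫ t, zf' (x - t) * zg' t)
    (hlimf : Tendsto (fun b => ∫ x in (0:ℝ)..cf, F (x + b) * zf' x) atTop (nhds Lf))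
    (hlimg : Tendsto (fun b => ∫ x in (0:ℝ)..cg, G (x + b) * zg' x) atTop (nhds Lg))
    (huniff : TendstoUniformlyOn
      (fun b s => ∫ x in (0:ℝ)..cf, F (x + s + b) * zf' x)
      (fun _ => Lf) atTop (Set.Icc 0 cg))
    (hunifg : TendstoUniformlyOn
      (fun b s => ∫ x in (0:ℝ)..cg, G (x + s + b) * zg' x)
      (fun _ => Lg) atTop (Set.Icc 0 cf)) :
    Tendsto (fun b => ∫ x in (0:ℝ)..(cf + cg), (α * F (x + b) + β * G (x + b)) * z' x)
      atTop (nhds (α * Lf + β * Lg)) := by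
  -- integrability of z'
  have hz'int : Integrable z' := by
    have h1 : Integrable (fun x => ∫ t, zf' (x - t) * zg' t) := by
      have h := (hzg'int.convolution_integrand (ContinuousLinearMap.mul ℝ ℝ)
        hzf'int).integral_prod_left
      refine h.congr (Filter.Eventually.of_forall fun x => ?_)
      apply MeasureTheory.integral_congr_ae
      filter_upwards with t
      exact mul_comm _ _
    exact h1.neg.congr (Filter.Eventually.of_forall fun x => (hz' x).symm)
  have hFi : ∀ b : ℝ, IntervalIntegrable (fun x => F (x + b) * z' x) volume 0 (cf + cg) :=
    fun b => (hz'int.intervalIntegrable).continuousOn_mul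
      ((hF.comp (continuous_id.add continuous_const)).continuousOn)
  have hGi : ∀ b : ℝ, IntervalIntegrable (fun x => G (x + b) * z' x) volume 0 (cf + cg) :=
    fun b => (hz'int.intervalIntegrable).continuousOn_mul
      ((hG.comp (continuous_id.add continuous_const)).continuousOn)
  have hsplit : ∀ b : ℝ, (∫ x in (0:ℝ)..(cf + cg), (α * F (x + b) + β * G (x + b)) * z' x)
      = α * (∫ x in (0:ℝ)..(cf + cg), F (x + b) * z' x)
        + β * (∫ x in (0:ℝ)..(cf + cg), G (x + b) * z' x) := by
    intro b
    rw [← intervalIntegral.integral_const_mul, ← intervalIntegral.integral_const_mul,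
      ← intervalIntegral.integral_add ((hFi b).const_mul α) ((hGi b).const_mul β)]
    apply intervalIntegral.integral_congr
    intro x _
    ring
  have hkeyF : Tendsto (fun b => ∫ x in (0:ℝ)..(cf + cg), F (x + b) * z' x) atTop (nhds Lf) := by
    have h := terminated_key cf cg hcf hcg F zf' zg' Lf hF hzf'int hzg'int hzf'supp hzg'supp
      hzg'sum huniff
    refine Tendsto.congr (fun b => ?_) h
    apply intervalIntegral.integral_congr
    intro x _
    simp only [hz']
  have hkeyG : Tendsto (fun b => ∫ x in (0:ℝ)..(cf + cg), G (x + b) * z' x) atTop (nhds Lg) := by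
    have hcomm : ∀ x : ℝ, (∫ t, zg' (x - t) * zf' t) = ∫ t, zf' (x - t) * zg' t := by
      intro x
      have h := integral_sub_left_eq_self (μ := volume)
        (fun t => zg' (x - t) * zf' t) x
      rw [← h]
      apply MeasureTheory.integral_congr_ae
      filter_upwards with t
      rw [sub_sub_cancel]
      ring
    have h := terminated_key cg cf hcg hcf G zg' zf' Lg hG hzg'int hzf'int hzg'supp hzf'supp
      hzf'sum hunifg
    rw [add_comm cg cf] at h
    refine Tendsto.congr (fun b => ?_) h
    apply intervalIntegral.integral_congr
    intro x _
    simp only [hz', hcomm]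
  have h := (hkeyF.const_mul α).add (hkeyG.const_mul β)
  exact Tendsto.congr (fun b => (hsplit b).symm) h
end

section
/- For α > 0 and the termination function z given by z(x) = 1 for x ≤ 0, z(x) = 1/2 for 0 < x < π/α, z(x) = 0 for x ≥ π/α, the limit lim_{b→∞} [∫_a^b sin(αx) dx + (1/2)∫_b^{b+π/α} sin(αx) dx] exists and equals cos(αa)/α. -/
open Filter intervalIntegral Real

lemma sin_integral_eq (α : ℝ) (hα : 0 < α) (a b : ℝ) :
    (∫ x in a..b, Real.sin (α * x)) = (Real.cos (α * a) - Real.cos (α * b)) / α := by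
  have h := intervalIntegral.integral_comp_mul_left (fun x => Real.sin x) (ne_of_gt hα) (a := a) (b := b)
  rw [h, integral_sin]
  field_simp
  rw [smul_eq_mul, ← mul_assoc, mul_one_div_cancel (ne_of_gt hα), one_mul]

/-- Example 1: the terminated integral of `sin (α x)` over `[a, ∞)` with the
step termination function (value `1/2` on `(0, π/α)`) equals `cos (α a) / α`. -/
theorem terminated_integral_sin
    (α a : ℝ) (hα : 0 < α) :
    Tendsto (fun b => (∫ x in a..b, Real.sin (α * x)) +
        (1/2) * ∫ x in b..(b + π / α), Real.sin (α * x))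
      atTop (nhds (Real.cos (α * a) / α)) := by
  have key : ∀ b : ℝ, (∫ x in a..b, Real.sin (α * x)) +
      (1/2) * ∫ x in b..(b + π / α), Real.sin (α * x) = Real.cos (α * a) / α := by
    intro b
    rw [sin_integral_eq α hα, sin_integral_eq α hα]
    have h1 : α * (b + π / α) = α * b + π := by field_simp
    rw [h1, Real.cos_add_pi]
    field_simp
    ring
  simp only [key]
  exact tendsto_const_nhds
end

section
/- For α > 0, lim_{b→∞} [∫_a^b x·cos(αx) dx + (3/4)∫_b^{b+π/α} x·cos(αx) dx + (1/4)∫_{b+π/α}^{b+2π/α} x·cos(αx) dx] exists and equals -cos(αa)/α² - a·sin(αa)/α. -/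
open Filter intervalIntegral Real

lemma xcos_integral (α : ℝ) (hα : α ≠ 0) (u v : ℝ) :
    (∫ x in u..v, x * Real.cos (α * x)) =
      (Real.cos (α * v) / α ^ 2 + v * Real.sin (α * v) / α) -
      (Real.cos (α * u) / α ^ 2 + u * Real.sin (α * u) / α) := by
  apply intervalIntegral.integral_eq_sub_of_hasDerivAt
  · intro x _
    have h1 : HasDerivAt (fun x : ℝ => α * x) α x := by
      simpa using (hasDerivAt_id x).const_mul α
    have hc : HasDerivAt (fun x : ℝ => Real.cos (α * x)) (-Real.sin (α * x) * α) x :=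
      (Real.hasDerivAt_cos (α * x)).comp x h1
    have hs : HasDerivAt (fun x : ℝ => Real.sin (α * x)) (Real.cos (α * x) * α) x :=
      (Real.hasDerivAt_sin (α * x)).comp x h1
    have h := (hc.div_const (α ^ 2)).add (((hasDerivAt_id x).mul hs).div_const α)
    convert h using 1
    · funext y; simp only [Pi.add_apply, Pi.mul_apply, id]
    · simp only [id]; field_simp; ring
  · exact (Continuous.mul continuous_id (Real.continuous_cos.comp
      (continuous_const.mul continuous_id))).intervalIntegrable u v

/-- Example 2: the terminated integral of `x cos (α x)` over `[a, ∞)` with the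
step termination function (3/4 on `(0, π/α)`, 1/4 on `(π/α, 2π/α)`)
equals `-cos (α a)/α² - a sin (α a)/α`. -/
theorem terminated_integral_x_cos
    (α a : ℝ) (hα : 0 < α) :
    Tendsto (fun b => (∫ x in a..b, x * Real.cos (α * x)) +
        (3/4) * (∫ x in b..(b + π / α), x * Real.cos (α * x)) +
        (1/4) * ∫ x in (b + π / α)..(b + 2 * π / α), x * Real.cos (α * x))
      atTop (nhds (-(Real.cos (α * a) / α ^ 2) - a * Real.sin (α * a) / α)) := by
  have hα' : α ≠ 0 := ne_of_gt hα
  have key : ∀ b : ℝ, (∫ x in a..b, x * Real.cos (α * x)) +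
        (3/4) * (∫ x in b..(b + π / α), x * Real.cos (α * x)) +
        (1/4) * (∫ x in (b + π / α)..(b + 2 * π / α), x * Real.cos (α * x)) =
        -(Real.cos (α * a) / α ^ 2) - a * Real.sin (α * a) / α := by
    intro b
    rw [xcos_integral α hα' a b, xcos_integral α hα' b (b + π / α),
      xcos_integral α hα' (b + π / α) (b + 2 * π / α)]
    have e1 : α * (b + π / α) = α * b + π := by field_simp
    have e2 : α * (b + 2 * π / α) = α * b + 2 * π := by field_simp
    rw [e1, e2, Real.cos_add_pi, Real.sin_add_pi, Real.cos_add_two_pi, Real.sin_add_two_pi]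
    field_simp
    ring
  simp only [key]
  exact tendsto_const_nhds
end

section
/- For α > 0 and any β ∈ ℝ, with weight w = 1/(1 + e^{βπ/α}), the limit lim_{b→∞} [∫_a^b e^{βx} sin(αx) dx + w·∫_b^{b+π/α} e^{βx} sin(αx) dx] exists and equals -e^{βa}(β sin(αa) - α cos(αa))/(α² + β²). -/
open Filter intervalIntegral Real

lemma hasDeriv_F (α β : ℝ) (hα : 0 < α) (x : ℝ) :
    HasDerivAt (fun x => Real.exp (β * x) * (β * Real.sin (α * x) - α * Real.cos (α * x)) /
      (α ^ 2 + β ^ 2)) (Real.exp (β * x) * Real.sin (α * x)) x := by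
  have he : HasDerivAt (fun x => Real.exp (β * x)) (β * Real.exp (β * x)) x := by
    simpa [mul_comm] using (HasDerivAt.exp ((hasDerivAt_id x).const_mul β))
  have hs : HasDerivAt (fun x => Real.sin (α * x)) (α * Real.cos (α * x)) x := by
    simpa [mul_comm] using (HasDerivAt.sin ((hasDerivAt_id x).const_mul α))
  have hc : HasDerivAt (fun x => Real.cos (α * x)) (-(α * Real.sin (α * x))) x := by
    simpa [mul_comm] using (HasDerivAt.cos ((hasDerivAt_id x).const_mul α))
  have hmain := (he.mul ((hs.const_mul β).sub (hc.const_mul α))).div_const (α ^ 2 + β ^ 2)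
  have hne : α ^ 2 + β ^ 2 ≠ 0 := by positivity
  refine hmain.congr_deriv ?_
  simp only [Pi.sub_apply]
  rw [div_eq_iff hne]
  ring

lemma integral_eq (α β : ℝ) (hα : 0 < α) (u v : ℝ) :
    (∫ x in u..v, Real.exp (β * x) * Real.sin (α * x)) =
      Real.exp (β * v) * (β * Real.sin (α * v) - α * Real.cos (α * v)) / (α ^ 2 + β ^ 2) -
      Real.exp (β * u) * (β * Real.sin (α * u) - α * Real.cos (α * u)) / (α ^ 2 + β ^ 2) := by
  refine intervalIntegral.integral_eq_sub_of_hasDerivAt (fun x _ => hasDeriv_F α β hα x) ?_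
  apply Continuous.intervalIntegrable
  continuity

/-- Example 3: the terminated integral of `e^{βx} sin (α x)` over `[a, ∞)` with the
step termination function of height `1/(1 + e^{βπ/α})` on `(0, π/α)` equals
`-e^{βa} (β sin (α a) - α cos (α a)) / (α² + β²)`. -/
theorem terminated_integral_exp_sin
    (α β a : ℝ) (hα : 0 < α) :
    Tendsto (fun b => (∫ x in a..b, Real.exp (β * x) * Real.sin (α * x)) +
        (1 / (1 + Real.exp (β * π / α))) *
          ∫ x in b..(b + π / α), Real.exp (β * x) * Real.sin (α * x))
      atTop
      (nhds (-(Real.exp (β * a) * (β * Real.sin (α * a) - α * Real.cos (α * a)) /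
        (α ^ 2 + β ^ 2)))) := by
  have hconst : ∀ b : ℝ, (∫ x in a..b, Real.exp (β * x) * Real.sin (α * x)) +
        (1 / (1 + Real.exp (β * π / α))) *
          ∫ x in b..(b + π / α), Real.exp (β * x) * Real.sin (α * x) =
      -(Real.exp (β * a) * (β * Real.sin (α * a) - α * Real.cos (α * a)) /
        (α ^ 2 + β ^ 2)) := by
    intro b
    rw [integral_eq α β hα, integral_eq α β hα]
    have harg : α * (b + π / α) = α * b + π := by field_simp
    have hexp : Real.exp (β * (b + π / α)) =
        Real.exp (β * b) * Real.exp (β * π / α) := by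
      rw [← Real.exp_add]; ring_nf
    rw [harg, hexp, Real.sin_add_pi, Real.cos_add_pi]
    have h1 : (0:ℝ) < 1 + Real.exp (β * π / α) := by positivity
    have h2 : α ^ 2 + β ^ 2 ≠ 0 := by positivity
    field_simp
    ring
  rw [show (fun b => (∫ x in a..b, Real.exp (β * x) * Real.sin (α * x)) +
        (1 / (1 + Real.exp (β * π / α))) *
          ∫ x in b..(b + π / α), Real.exp (β * x) * Real.sin (α * x)) =
      fun _ => -(Real.exp (β * a) * (β * Real.sin (α * a) - α * Real.cos (α * a)) /
        (α ^ 2 + β ^ 2)) from funext hconst]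
  exact tendsto_const_nhds
end

section
/- For y > 0 and a > 0, the derivative with respect to y of the cosine-integral expression ∫_a^∞ cos(xy)/x dx = -Ci(ay) equals -cos(ay)/y, and this coincides with the terminated integral of ∂/∂y (cos(xy)/x) = -sin(xy): namely lim_{b→∞}[∫_a^b (-sin(xy)) dx + (1/2)∫_b^{b+π/y} (-sin(xy)) dx] = -cos(ay)/y. -/
open Filter intervalIntegral Real

/-- Example 4: if `I y` is the (conditionally convergent) improper integral
`∫_a^∞ cos (x y)/x dx`, then `I` is differentiable at `y > 0` with derivative
`-cos (a y)/y`, and this value equals the terminated integral of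
`∂/∂y (cos (x y)/x) = -sin (x y)` over `[a, ∞)`. -/
theorem deriv_under_terminated_integral_cos
    (a y : ℝ) (ha : 0 < a) (hy : 0 < y)
    (I : ℝ → ℝ)
    (hI : ∀ t : ℝ, 0 < t →
      Tendsto (fun b => ∫ x in a..b, Real.cos (x * t) / x) atTop (nhds (I t))) :
    HasDerivAt I (-(Real.cos (a * y) / y)) y ∧
    Tendsto (fun b => (∫ x in a..b, -Real.sin (x * y)) +
        (1/2) * ∫ x in b..(b + π / y), -Real.sin (x * y))
      atTop (nhds (-(Real.cos (a * y) / y))) := by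
  set f : ℝ → ℝ := fun u => Real.cos u / u with hf
  -- integrability of cos u / u on positive intervals
  have hint : ∀ c d : ℝ, 0 < c → 0 < d →
      IntervalIntegrable f MeasureTheory.volume c d := by
    intro c d hc hd
    apply ContinuousOn.intervalIntegrable
    intro x hx
    have hx0 : (0:ℝ) < x := lt_of_lt_of_le (lt_min hc hd) hx.1
    exact (Real.continuous_cos.continuousAt.div continuousAt_id hx0.ne').continuousWithinAt
  -- the explicit closed form for I on (0, ∞)
  have key : ∀ t : ℝ, 0 < t → I t = I 1 - ∫ u in a..(a*t), f u := by
    intro t ht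
    have h1 : Tendsto (fun b : ℝ => ∫ u in a..(b*t), f u) atTop (nhds (I 1)) := by
      have := (hI 1 one_pos)
      simp only [mul_one] at this
      exact this.comp (tendsto_id.atTop_mul_const ht)
    have h2 : Tendsto (fun b : ℝ => (∫ u in a..(b*t), f u) - ∫ u in a..(a*t), f u)
        atTop (nhds (I 1 - ∫ u in a..(a*t), f u)) := h1.sub_const _
    refine tendsto_nhds_unique (hI t ht) (h2.congr' ?_)
    filter_upwards [eventually_ge_atTop a] with b hb
    have hb0 : 0 < b := lt_of_lt_of_le ha hb
    calc (∫ u in a..(b*t), f u) - ∫ u in a..(a*t), f u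
        = ∫ u in (a*t)..(b*t), f u :=
          integral_interval_sub_left (hint a (b*t) ha (mul_pos hb0 ht))
            (hint a (a*t) ha (mul_pos ha ht))
      _ = t * ∫ x in a..b, f (x * t) := by
          rw [integral_comp_mul_right f ht.ne', smul_eq_mul, ← mul_assoc,
            mul_inv_cancel₀ ht.ne', one_mul]
      _ = ∫ x in a..b, t * f (x * t) := (integral_const_mul t _).symm
      _ = ∫ x in a..b, Real.cos (x * t) / x := by
          apply integral_congr
          intro x hx
          have hx0 : (0:ℝ) < x := lt_of_lt_of_le (lt_min ha hb0) hx.1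
          simp only [hf]
          field_simp
  -- derivative of the closed form
  have hF : HasDerivAt (fun s => ∫ u in a..s, f u) (f (a*y)) (a*y) := by
    refine integral_hasDerivAt_right (hint a (a*y) ha (mul_pos ha hy)) ?_ ?_
    · exact (Real.measurable_cos.div measurable_id).stronglyMeasurable.stronglyMeasurableAtFilter
    · exact Real.continuous_cos.continuousAt.div continuousAt_id (mul_pos ha hy).ne'
  have hay : HasDerivAt (fun t : ℝ => a * t) a y := by
    simpa using (hasDerivAt_id y).const_mul a
  have hg : HasDerivAt (fun t : ℝ => I 1 - ∫ u in a..(a*t), f u)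
      (-(Real.cos (a*y) / y)) y := by
    have : HasDerivAt (fun t : ℝ => I 1 - ∫ u in a..(a*t), f u) (-(f (a*y) * a)) y :=
      ((hF.comp y hay).const_sub (I 1))
    convert this using 1
    simp only [hf]
    field_simp
  have hIderiv : HasDerivAt I (-(Real.cos (a*y) / y)) y := by
    refine hg.congr_of_eventuallyEq ?_
    filter_upwards [eventually_gt_nhds hy] with t ht
    exact key t ht
  refine ⟨hIderiv, ?_⟩
  -- the terminated integral is constantly -cos(ay)/y
  have hconst : ∀ b : ℝ, (∫ x in a..b, -Real.sin (x * y)) +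
      (1/2) * (∫ x in b..(b + π / y), -Real.sin (x * y)) = -(Real.cos (a*y) / y) := by
    intro b
    have h1 : ∀ c d : ℝ, (∫ x in c..d, -Real.sin (x * y))
        = -(y⁻¹ * (Real.cos (c*y) - Real.cos (d*y))) := by
      intro c d
      rw [intervalIntegral.integral_neg, integral_comp_mul_right Real.sin hy.ne',
        integral_sin, smul_eq_mul]
    rw [h1, h1]
    have : (b + π / y) * y = b * y + π := by field_simp
    rw [this, Real.cos_add_pi]
    field_simp
    ring
  simpa only [hconst] using tendsto_const_nhds
end

section
/- Differentiation under the terminated integral for sin(xy): for y > 0, d/dy [cos(ay)/y] = -cos(ay)/y² - a sin(ay)/y, and this equals the terminated integral of ∂/∂y sin(xy) = x cos(xy) over [a,∞), i.e. lim_{b→∞}[∫_a^b x cos(xy) dx + (3/4)∫_b^{b+π/y} x cos(xy) dx + (1/4)∫_{b+π/y}^{b+2π/y} x cos(xy) dx] = -cos(ay)/y² - a sin(ay)/y. -/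
open Filter intervalIntegral Real

lemma integral_x_cos_aux (y : ℝ) (hy : y ≠ 0) (p q : ℝ) :
    ∫ x in p..q, x * Real.cos (x * y) =
      (q * Real.sin (q * y) / y + Real.cos (q * y) / y ^ 2) -
      (p * Real.sin (p * y) / y + Real.cos (p * y) / y ^ 2) := by
  apply intervalIntegral.integral_eq_sub_of_hasDerivAt
  · intro x _
    have hsin : HasDerivAt (fun x : ℝ => Real.sin (x * y)) (Real.cos (x * y) * y) x :=
      (Real.hasDerivAt_sin (x * y)).comp (h := fun x => x * y) x (by simpa using (hasDerivAt_id x).mul_const y)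
    have hcos : HasDerivAt (fun x : ℝ => Real.cos (x * y)) (-Real.sin (x * y) * y) x :=
      (Real.hasDerivAt_cos (x * y)).comp (h := fun x => x * y) x (by simpa using (hasDerivAt_id x).mul_const y)
    have h1 : HasDerivAt (fun x : ℝ => x * Real.sin (x * y))
        (1 * Real.sin (x * y) + x * (Real.cos (x * y) * y)) x :=
      (hasDerivAt_id x).mul hsin
    have h := (h1.div_const y).add (hcos.div_const (y ^ 2))
    convert h using 1
    · rfl
    field_simp
    ring
  · exact (Continuous.mul continuous_id (by continuity)).intervalIntegrable p q

/-- Example 5: differentiation under the terminated integral for `sin (x y)`: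
`d/dy [cos (a y)/y] = -cos (a y)/y² - a sin (a y)/y`, and this equals the
terminated integral of `∂/∂y sin (x y) = x cos (x y)` over `[a, ∞)`. -/
theorem deriv_under_terminated_integral_sin
    (a y : ℝ) (hy : 0 < y) :
    HasDerivAt (fun t => Real.cos (a * t) / t)
      (-(Real.cos (a * y) / y ^ 2) - a * Real.sin (a * y) / y) y ∧
    Tendsto (fun b => (∫ x in a..b, x * Real.cos (x * y)) +
        (3/4) * (∫ x in b..(b + π / y), x * Real.cos (x * y)) +
        (1/4) * ∫ x in (b + π / y)..(b + 2 * π / y), x * Real.cos (x * y))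
      atTop (nhds (-(Real.cos (a * y) / y ^ 2) - a * Real.sin (a * y) / y)) := by
  have hy0 : y ≠ 0 := ne_of_gt hy
  constructor
  · have hcos : HasDerivAt (fun t : ℝ => Real.cos (a * t)) (-Real.sin (a * y) * a) y :=
      (Real.hasDerivAt_cos (a * y)).comp y (by simpa using (hasDerivAt_id y).const_mul a)
    have h := hcos.div (hasDerivAt_id y) hy0
    refine h.congr_deriv ?_
    simp only [id]
    field_simp
    ring
  · have key : ∀ b : ℝ, (∫ x in a..b, x * Real.cos (x * y)) +
        (3/4) * (∫ x in b..(b + π / y), x * Real.cos (x * y)) +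
        (1/4) * (∫ x in (b + π / y)..(b + 2 * π / y), x * Real.cos (x * y)) =
        -(Real.cos (a * y) / y ^ 2) - a * Real.sin (a * y) / y := by
      intro b
      rw [integral_x_cos_aux y hy0, integral_x_cos_aux y hy0, integral_x_cos_aux y hy0]
      have e1 : (b + π / y) * y = b * y + π := by field_simp
      have e2 : (b + 2 * π / y) * y = b * y + 2 * π := by field_simp
      rw [e1, e2, Real.sin_add_pi, Real.cos_add_pi, Real.sin_add_two_pi, Real.cos_add_two_pi]
      field_simp
      ring
    exact tendsto_const_nhds.congr fun b => (key b).symm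
end

section
/- Invariance under affine substitution: let f have antiderivative F, let z be a termination function with support parameter γ, and suppose lim_{β→∞} [∫_α^β f(u) du + ∫_β^{β+γ} f(u) ζ(u-β) du] = L. If u = r + sx with s > 0, α = r + sa, γ = sc, then with g(x) = s·f(r+sx) and z(x) = ζ(sx), z is again a termination function (not depending on b) and lim_{b→∞} [∫_a^b g(x) dx + ∫_b^{b+c} g(x) z(x-b) dx] = L. -/
open Filter intervalIntegral Real

/-- Affine change of variable `u = r + s x` (`s > 0`) preserves the terminated
integral: `z x = ζ (s x)` is again a termination function (independent of `b`)
and the terminated limit for `g x = s f (r + s x)` equals the original limit `L`. -/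
theorem terminated_integral_affine_substitution
    (r s γ a L : ℝ) (hs : 0 < s) (hγ : 0 < γ)
    (f ζ : ℝ → ℝ)
    (hζ1 : ∀ x ≤ 0, ζ x = 1) (hζ0 : ∀ x ≥ γ, ζ x = 0)
    (hζd : Differentiable ℝ ζ)
    (hζsum : ∫ x in (0:ℝ)..γ, deriv ζ x = -1)
    (hL : Tendsto (fun β => (∫ u in (r + s * a)..β, f u) +
        ∫ u in β..(β + γ), f u * ζ (u - β)) atTop (nhds L)) :
    (∀ x ≤ 0, ζ (s * x) = 1) ∧
    (∀ x ≥ γ / s, ζ (s * x) = 0) ∧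
    (∫ x in (0:ℝ)..(γ / s), deriv (fun t => ζ (s * t)) x = -1) ∧
    Tendsto (fun b => (∫ x in a..b, s * f (r + s * x)) +
        ∫ x in b..(b + γ / s), s * f (r + s * x) * ζ (s * (x - b)))
      atTop (nhds L) := by
  have hsne : s ≠ 0 := ne_of_gt hs
  refine ⟨?_, ?_, ?_, ?_⟩
  · intro x hx
    exact hζ1 _ (mul_nonpos_of_nonneg_of_nonpos hs.le hx)
  · intro x hx
    exact hζ0 _ ((div_le_iff₀' hs).mp hx)
  · have hder : ∀ x : ℝ, deriv (fun t => ζ (s * t)) x = s * deriv ζ (s * x) := by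
      intro x
      have h1 : HasDerivAt (fun t : ℝ => s * t) s x := by
        simpa using (hasDerivAt_id x).const_mul s
      have h2 : HasDerivAt ζ (deriv ζ (s * x)) (s * x) :=
        (hζd (s * x)).hasDerivAt
      have h3 : HasDerivAt (fun t => ζ (s * t)) (deriv ζ (s * x) * s) x :=
        h2.comp x h1
      rw [h3.deriv]; ring
    rw [intervalIntegral.integral_congr (fun x _ => hder x)]
    rw [intervalIntegral.integral_const_mul, intervalIntegral.integral_comp_mul_left _ hsne]
    rw [mul_zero, mul_div_cancel₀ _ hsne]
    rw [smul_eq_mul, ← mul_assoc, mul_inv_cancel₀ hsne, one_mul, hζsum]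
  · have key : (fun b => (∫ x in a..b, s * f (r + s * x)) +
        ∫ x in b..(b + γ / s), s * f (r + s * x) * ζ (s * (x - b))) =
        (fun β => (∫ u in (r + s * a)..β, f u) +
        ∫ u in β..(β + γ), f u * ζ (u - β)) ∘ (fun b => r + s * b) := by
      funext b
      simp only [Function.comp]
      congr 1
      · rw [intervalIntegral.integral_const_mul, ← smul_eq_mul,
          intervalIntegral.smul_integral_comp_add_mul f s r]
      · have : ∀ x : ℝ, s * f (r + s * x) * ζ (s * (x - b)) =
            s * ((fun u => f u * ζ (u - (r + s * b))) (r + s * x)) := by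
          intro x; simp only []; ring_nf
        rw [intervalIntegral.integral_congr (fun x _ => this x)]
        rw [intervalIntegral.integral_const_mul, ← smul_eq_mul,
          intervalIntegral.smul_integral_comp_add_mul
            (fun u => f u * ζ (u - (r + s * b))) s r]
        congr 1
        field_simp; ring
    rw [key]
    exact hL.comp (tendsto_atTop_add_const_left _ r
      ((tendsto_const_mul_atTop_of_pos hs).mpr tendsto_id))
end

section
/- For the square wave f(x) = 1 - 2·(⌊x⌋ mod 2) on [0,∞), with termination function z equal to 1/2 on (0,1) and 0 on [1,∞), the terminated integral exists and equals 1/2: lim_{b→∞} [∫_0^b f(x) dx + (1/2)∫_b^{b+1} f(x) dx] = 1/2. -/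
open Filter intervalIntegral Real

noncomputable def fsq : ℝ → ℝ := fun x => 1 - 2 * ((Int.floor x % 2 : ℤ) : ℝ)

lemma fsq_meas : Measurable fsq :=
  measurable_const.sub (measurable_const.mul
    ((measurable_from_top (f := fun n : ℤ => ((n % 2 : ℤ) : ℝ))).comp Int.measurable_floor))

lemma fsq_intble (a b : ℝ) : IntervalIntegrable fsq MeasureTheory.volume a b := by
  rw [intervalIntegrable_iff]
  apply MeasureTheory.Measure.integrableOn_of_bounded (M := 3)
    measure_Ioc_lt_top.ne fsq_meas.aestronglyMeasurable
  filter_upwards with x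
  have h : (0:ℤ) ≤ Int.floor x % 2 := Int.emod_nonneg _ (by norm_num)
  have h2 : Int.floor x % 2 < 2 := Int.emod_lt_of_pos _ (by norm_num)
  simp only [fsq, Real.norm_eq_abs]
  have h3 : (0:ℝ) ≤ ((Int.floor x % 2 : ℤ) : ℝ) := by exact_mod_cast h
  have h4 : ((Int.floor x % 2 : ℤ) : ℝ) < 2 := by exact_mod_cast h2
  rw [abs_le]; constructor <;> linarith

lemma fsq_succ (x : ℝ) : fsq (x + 1) = - fsq x := by
  simp only [fsq]
  rw [show Int.floor (x + 1) = Int.floor x + 1 by exact_mod_cast Int.floor_add_intCast x 1]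
  have : (Int.floor x + 1) % 2 = 1 - Int.floor x % 2 := by omega
  rw [this]
  push_cast
  ring

lemma fsq_int01 : (∫ x in (0:ℝ)..1, fsq x) = 1 := by
  have : ∀ᵐ x : ℝ, x ∈ Set.uIoc (0:ℝ) 1 → fsq x = 1 := by
    have h1 : ∀ᵐ x : ℝ, x ≠ 1 := by
      rw [MeasureTheory.ae_iff]; simpa using MeasureTheory.volume_singleton (a := (1:ℝ))
    filter_upwards [h1] with x hx1 hx
    rw [Set.uIoc_of_le (by norm_num)] at hx
    have hlt : x < 1 := lt_of_le_of_ne hx.2 hx1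
    have : Int.floor x = 0 := by
      rw [Int.floor_eq_zero_iff]; exact ⟨le_of_lt hx.1, hlt⟩
    simp [fsq, this]
  rw [integral_congr_ae this]
  simp

lemma fsq_key (b : ℝ) : (∫ x in (0:ℝ)..b, fsq x) + (∫ x in (0:ℝ)..(b+1), fsq x) = 1 := by
  have hsplit : (∫ x in (0:ℝ)..1, fsq x) + (∫ x in (1:ℝ)..(b+1), fsq x)
      = ∫ x in (0:ℝ)..(b+1), fsq x :=
    integral_add_adjacent_intervals (fsq_intble 0 1) (fsq_intble 1 (b+1))
  have hshift : (∫ x in (0:ℝ)..b, fsq (x + 1)) = ∫ x in (1:ℝ)..(b+1), fsq x := by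
    simpa using integral_comp_add_right (a := (0:ℝ)) (b := b) fsq 1
  have hneg : (∫ x in (0:ℝ)..b, fsq (x + 1)) = - ∫ x in (0:ℝ)..b, fsq x := by
    rw [show (fun x => fsq (x + 1)) = fun x => - fsq x from funext fsq_succ]
    exact intervalIntegral.integral_neg
  rw [← hsplit, ← hshift, hneg, fsq_int01]
  ring

/-- Example 6 (first part): the terminated integral of the ±1 square wave
`f x = 1 - 2 (⌊x⌋ mod 2)` over `[0, ∞)`, with termination function `1/2` on `(0,1)`,
exists and equals `1/2`. -/
theorem terminated_integral_square_wave :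
    Tendsto (fun b => (∫ x in (0:ℝ)..b, (1 - 2 * ((Int.floor x % 2 : ℤ) : ℝ))) +
        (1/2) * ∫ x in b..(b + 1), (1 - 2 * ((Int.floor x % 2 : ℤ) : ℝ)))
      atTop (nhds (1/2)) := by
  have : (fun b => (∫ x in (0:ℝ)..b, (1 - 2 * ((Int.floor x % 2 : ℤ) : ℝ))) +
        (1/2) * ∫ x in b..(b + 1), (1 - 2 * ((Int.floor x % 2 : ℤ) : ℝ)))
      = fun _ => (1/2 : ℝ) := by
    funext b
    show (∫ x in (0:ℝ)..b, fsq x) + (1/2) * ∫ x in b..(b+1), fsq x = 1/2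
    have hadj : (∫ x in (0:ℝ)..b, fsq x) + (∫ x in b..(b+1), fsq x)
        = ∫ x in (0:ℝ)..(b+1), fsq x :=
      integral_add_adjacent_intervals (fsq_intble 0 b) (fsq_intble b (b+1))
    have hk := fsq_key b
    linarith
  rw [this]
  exact tendsto_const_nhds
end

section
/- Uniqueness of the terminated integral value: if z₁ and z₂ are two termination functions for f (i.e., the terminated limits L₁ = -F(a) - lim_b ∫₀^{c₁} F(x+b) z₁'(x) dx and L₂ = -F(a) - lim_b ∫₀^{c₂} F(x+b) z₂'(x) dx both exist), then L₁ = L₂, assuming the uniform convergence hypotheses required to combine termination functions via convolution hold for both. -/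
open MeasureTheory Filter intervalIntegral

/-- Interval integral over the support equals the full integral. -/
lemma support_integral_eq (c : ℝ) (hc : 0 ≤ c) (w : ℝ → ℝ)
    (hsupp : ∀ x, x ∉ Set.Icc (0:ℝ) c → w x = 0) :
    ∫ x in (0:ℝ)..c, w x = ∫ x, w x := by
  rw [intervalIntegral.integral_of_le hc, ← MeasureTheory.integral_Icc_eq_integral_Ioc]
  exact MeasureTheory.setIntegral_eq_integral_of_forall_compl_eq_zero hsupp

/-- If `u b → M` uniformly on the support of `w`, and `∫ w = -1`, then
`∫ u b * w → -M`. -/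
lemma tendsto_integral_mul_of_unif (c M : ℝ) (u : ℝ → ℝ → ℝ) (w : ℝ → ℝ)
    (hw : Integrable w)
    (hsupp : ∀ x, x ∉ Set.Icc (0:ℝ) c → w x = 0)
    (hsum : ∫ x, w x = -1)
    (hint : ∀ b, Integrable (fun s => u b s * w s))
    (hunif : TendstoUniformlyOn u (fun _ => M) atTop (Set.Icc 0 c)) :
    Tendsto (fun b => ∫ s, u b s * w s) atTop (nhds (-M)) := by
  rw [Metric.tendsto_nhds]
  intro ε hε
  have hWnn : (0:ℝ) ≤ ∫ s, ‖w s‖ := integral_nonneg fun s => norm_nonneg _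
  set δ : ℝ := ε / ((∫ s, ‖w s‖) + 1) with hδdef
  have hδpos : 0 < δ := div_pos hε (by linarith)
  filter_upwards [(Metric.tendstoUniformlyOn_iff.mp hunif) δ hδpos] with b hb
  have hsplit : ∫ s, (u b s - M) * w s = (∫ s, u b s * w s) - M * ∫ s, w s := by
    rw [← MeasureTheory.integral_const_mul]
    rw [← MeasureTheory.integral_sub (hint b) (hw.const_mul M)]
    congr 1; ext s; ring
  have hptw : ∀ s, ‖(u b s - M) * w s‖ ≤ δ * ‖w s‖ := by
    intro s
    by_cases hs : s ∈ Set.Icc (0:ℝ) c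
    · rw [norm_mul]
      have := hb s hs
      rw [Real.dist_eq] at this
      have h1 : ‖u b s - M‖ ≤ δ := by
        rw [Real.norm_eq_abs, abs_sub_comm]; exact le_of_lt this
      exact mul_le_mul_of_nonneg_right h1 (norm_nonneg _)
    · simp [hsupp s hs]
  have hbound : ‖∫ s, (u b s - M) * w s‖ ≤ δ * ∫ s, ‖w s‖ := by
    calc ‖∫ s, (u b s - M) * w s‖ ≤ ∫ s, ‖(u b s - M) * w s‖ :=
          MeasureTheory.norm_integral_le_integral_norm _
      _ ≤ ∫ s, δ * ‖w s‖ := by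
          refine MeasureTheory.integral_mono_of_nonneg ?_ (hw.norm.const_mul δ) ?_
          · exact Filter.Eventually.of_forall fun s => norm_nonneg _
          · exact Filter.Eventually.of_forall hptw
      _ = δ * ∫ s, ‖w s‖ := MeasureTheory.integral_const_mul δ _
  have : dist (∫ s, u b s * w s) (-M) = ‖∫ s, (u b s - M) * w s‖ := by
    rw [hsplit, hsum, Real.dist_eq, Real.norm_eq_abs]
    congr 1; ring
  rw [this]
  calc ‖∫ s, (u b s - M) * w s‖ ≤ δ * ∫ s, ‖w s‖ := hbound
    _ < δ * ((∫ s, ‖w s‖) + 1) := by nlinarith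
    _ = ε := by rw [hδdef]; exact div_mul_cancel₀ ε (ne_of_gt (by linarith))

/-- Uniqueness of the terminated integral value: two termination functions for `f`
(whose terminated limits both exist, with the uniform-convergence hypotheses needed
for the convolution combination lemma) give the same value. -/
theorem terminated_integral_unique
    (a c₁ c₂ : ℝ) (hc₁ : 0 < c₁) (hc₂ : 0 < c₂)
    (F z₁' z₂' : ℝ → ℝ) (M₁ M₂ : ℝ)
    (hF : Continuous F)
    (hz₁'int : Integrable z₁') (hz₂'int : Integrable z₂')
    (hz₁'supp : ∀ x, x ∉ Set.Icc (0:ℝ) c₁ → z₁' x = 0)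
    (hz₂'supp : ∀ x, x ∉ Set.Icc (0:ℝ) c₂ → z₂' x = 0)
    (hz₁'sum : ∫ x, z₁' x = -1) (hz₂'sum : ∫ x, z₂' x = -1)
    (hlim₁ : Tendsto (fun b => ∫ x in (0:ℝ)..c₁, F (x + b) * z₁' x) atTop (nhds M₁))
    (hlim₂ : Tendsto (fun b => ∫ x in (0:ℝ)..c₂, F (x + b) * z₂' x) atTop (nhds M₂))
    (hunif₁ : TendstoUniformlyOn
      (fun b s => ∫ x in (0:ℝ)..c₁, F (x + s + b) * z₁' x)
      (fun _ => M₁) atTop (Set.Icc 0 c₂))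
    (hunif₂ : TendstoUniformlyOn
      (fun b s => ∫ x in (0:ℝ)..c₂, F (x + s + b) * z₂' x)
      (fun _ => M₂) atTop (Set.Icc 0 c₁)) :
    -F a - M₁ = -F a - M₂ := by
  -- the doubly-integrated function
  set H : ℝ → ℝ × ℝ → ℝ := fun b p => F (p.1 + p.2 + b) * (z₁' p.1 * z₂' p.2) with hHdef
  have hHint : ∀ b, Integrable (H b) (volume.prod volume) := by
    intro b
    obtain ⟨C, hC⟩ := (isCompact_Icc (a := b) (b := b + (c₁ + c₂))).exists_bound_of_continuousOn
      hF.continuousOn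
    have hmeas : AEStronglyMeasurable (H b) (volume.prod volume) := by
      have h1 : Continuous fun p : ℝ × ℝ => F (p.1 + p.2 + b) :=
        hF.comp (by continuity)
      exact h1.aestronglyMeasurable.mul
        ((hz₁'int.mul_prod hz₂'int).aestronglyMeasurable)
    refine Integrable.mono' (((hz₁'int.norm.mul_prod hz₂'int.norm)).const_mul C) hmeas ?_
    refine Filter.Eventually.of_forall fun p => ?_
    by_cases h1 : p.1 ∈ Set.Icc (0:ℝ) c₁
    · by_cases h2 : p.2 ∈ Set.Icc (0:ℝ) c₂
      · have hmem : p.1 + p.2 + b ∈ Set.Icc b (b + (c₁ + c₂)) := by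
          constructor
          · nlinarith [h1.1, h2.1]
          · nlinarith [h1.2, h2.2]
        have := hC _ hmem
        rw [hHdef]
        simp only [norm_mul]
        calc ‖F (p.1 + p.2 + b)‖ * (‖z₁' p.1‖ * ‖z₂' p.2‖)
            ≤ C * (‖z₁' p.1‖ * ‖z₂' p.2‖) :=
              mul_le_mul_of_nonneg_right this (by positivity)
          _ = C * (‖z₁' p.1‖ * ‖z₂' p.2‖) := rfl
      · simp [hHdef, hz₂'supp _ h2]
    · simp [hHdef, hz₁'supp _ h1]
  -- the two iterated integrals agree (Fubini)
  have hfub : ∀ b, (∫ s, (∫ x, F (x + s + b) * z₁' x) * z₂' s)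
      = ∫ x, (∫ s, F (s + x + b) * z₂' s) * z₁' x := by
    intro b
    have hswap := MeasureTheory.integral_integral_swap
      (f := fun x s => H b (x, s)) (μ := volume) (ν := volume) (hHint b)
    calc (∫ s, (∫ x, F (x + s + b) * z₁' x) * z₂' s)
        = ∫ s, ∫ x, H b (x, s) := by
          congr 1; ext s
          rw [← MeasureTheory.integral_mul_const]
          congr 1; ext x; rw [hHdef]; ring
      _ = ∫ x, ∫ s, H b (x, s) := hswap.symm
      _ = ∫ x, (∫ s, F (s + x + b) * z₂' s) * z₁' x := by
          congr 1; ext x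
          show (∫ s, H b (x, s)) = (∫ s, F (s + x + b) * z₂' s) * z₁' x
          rw [← MeasureTheory.integral_mul_const]
          congr 1; ext s; simp only [hHdef]; ring
  -- marginal integrabilities
  have hint₂ : ∀ b, Integrable (fun s => (∫ x, F (x + s + b) * z₁' x) * z₂' s) := by
    intro b
    have := (hHint b).integral_prod_right
    refine this.congr (Filter.Eventually.of_forall fun s => ?_)
    show (∫ x, H b (x, s)) = (∫ x, F (x + s + b) * z₁' x) * z₂' s
    rw [← MeasureTheory.integral_mul_const]
    congr 1; ext x; simp only [hHdef]; ring
  have hint₁ : ∀ b, Integrable (fun x => (∫ s, F (s + x + b) * z₂' s) * z₁' x) := by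
    intro b
    have := (hHint b).integral_prod_left
    refine this.congr (Filter.Eventually.of_forall fun x => ?_)
    show (∫ s, H b (x, s)) = (∫ s, F (s + x + b) * z₂' s) * z₁' x
    rw [← MeasureTheory.integral_mul_const]
    congr 1; ext s; simp only [hHdef]; ring
  -- uniform limits rewritten over full integrals
  have hunif₁' : TendstoUniformlyOn
      (fun b s => ∫ x, F (x + s + b) * z₁' x) (fun _ => M₁) atTop (Set.Icc 0 c₂) := by
    have : (fun b s => ∫ x, F (x + s + b) * z₁' x)
        = fun b s => ∫ x in (0:ℝ)..c₁, F (x + s + b) * z₁' x := by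
      funext b s
      exact (support_integral_eq c₁ hc₁.le _ (fun x hx => by simp [hz₁'supp x hx])).symm
    rw [this]; exact hunif₁
  have hunif₂' : TendstoUniformlyOn
      (fun b s => ∫ x, F (x + s + b) * z₂' x) (fun _ => M₂) atTop (Set.Icc 0 c₁) := by
    have : (fun b s => ∫ x, F (x + s + b) * z₂' x)
        = fun b s => ∫ x in (0:ℝ)..c₂, F (x + s + b) * z₂' x := by
      funext b s
      exact (support_integral_eq c₂ hc₂.le _ (fun x hx => by simp [hz₂'supp x hx])).symm
    rw [this]; exact hunif₂
  -- the two limits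
  have hz₁sum' : ∫ x, z₁' x = -1 := hz₁'sum
  have T₁ : Tendsto (fun b => ∫ s, (∫ x, F (x + s + b) * z₁' x) * z₂' s)
      atTop (nhds (-M₁)) :=
    tendsto_integral_mul_of_unif c₂ M₁ _ z₂' hz₂'int hz₂'supp hz₂'sum hint₂ hunif₁'
  have T₂ : Tendsto (fun b => ∫ x, (∫ s, F (s + x + b) * z₂' s) * z₁' x)
      atTop (nhds (-M₂)) := by
    refine tendsto_integral_mul_of_unif c₁ M₂ _ z₁' hz₁'int hz₁'supp hz₁'sum hint₁ ?_
    exact hunif₂'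
  have T₁' : Tendsto (fun b => ∫ x, (∫ s, F (s + x + b) * z₂' s) * z₁' x)
      atTop (nhds (-M₁)) := by
    refine T₁.congr fun b => hfub b
  have : -M₁ = -M₂ := tendsto_nhds_unique T₁' T₂
  linarith
end
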